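/- Let n ≥ 1 and let μ be a partition of 2n. For A, B ∈ M_{2n}, the number of permutations π of Fin (2n) of cycle type μ (i.e., whose multiset of orbit sizes on Fin (2n) equals the multiset of parts of μ) satisfying π A π⁻¹ = B depends only on the partition d(A,B). Writing m(μ, 2τ) for this common value when d(A,B) = 2τ (τ a partition of n), the M_{2n} × M_{2n} matrix K_μ with (A,B) entry equal to the number of π of cycle type μ with π A π⁻¹ = B satisfies K_μ = Σ_{τ ⊢ n} m(μ, 2τ) · N_{2τ}. -/

import Mathlib

/-- The multiset of cardinalities of the orbits of a subgroup of permutations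
acting on a finite type. -/
noncomputable def orbitSizes {α : Type*} [Fintype α] (G : Subgroup (Equiv.Perm α)) :
    Multiset ℕ :=
  letI : Fintype (Quotient (MulAction.orbitRel G α)) := Fintype.ofFinite _
  (Finset.univ : Finset (Quotient (MulAction.orbitRel G α))).val.map
    fun q => Nat.card (MulAction.orbit G q.out)

/-- `d(A,B)`. -/
noncomputable def dMatch {N : ℕ} (A B : Equiv.Perm (Fin N)) : Multiset ℕ :=
  orbitSizes (Subgroup.closure {A, B})

/-- The multiset of sizes of the orbits of the cyclic group generated by a
permutation (the cycle type, counting fixed points as parts equal to 1). -/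
noncomputable def permOrbitSizes {N : ℕ} (π : Equiv.Perm (Fin N)) : Multiset ℕ :=
  orbitSizes (Subgroup.zpowers π)

/-- Doubling every part of a partition (as a multiset). -/
def twice (m : Multiset ℕ) : Multiset ℕ := m.map (fun i => 2 * i)

/-- Perfect matchings of the complete graph on `Fin N`. -/
abbrev PerfMatching (N : ℕ) := {A : Equiv.Perm (Fin N) // A * A = 1 ∧ ∀ x, A x ≠ x}

/-- The orbital basis element `N_{2μ}`. -/
noncomputable def Nmat (n : ℕ) (μ : Nat.Partition n) :
    Matrix (PerfMatching (2 * n)) (PerfMatching (2 * n)) ℂ :=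
  Matrix.of fun A B => if dMatch A.1 B.1 = twice μ.parts then 1 else 0

/-- The number of permutations of `Fin (2n)` of cycle type `μ ⊢ 2n` taking the perfect
matching `A` to the perfect matching `B`. -/
noncomputable def conjCount (n : ℕ) (μ : Nat.Partition (2 * n))
    (A B : PerfMatching (2 * n)) : ℕ :=
  Nat.card {π : Equiv.Perm (Fin (2 * n)) //
    permOrbitSizes π = μ.parts ∧ π * A.1 * π⁻¹ = B.1}

/-- The matrix `K_μ` whose `(A,B)` entry is the number of permutations of cycle type
`μ` taking `A` to `B`. -/
noncomputable def Kmat (n : ℕ) (μ : Nat.Partition (2 * n)) :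
    Matrix (PerfMatching (2 * n)) (PerfMatching (2 * n)) ℂ :=
  Matrix.of fun A B => (conjCount n μ A B : ℂ)

namespace PMaux
open Equiv MulAction Subgroup

variable {α : Type*}

/-- The standard traversal of the joint orbit of two involutions. -/
noncomputable def ff (A B : Equiv.Perm α) (x : α) (j : ℤ) : α :=
  if Even j then ((B*A)^(j/2) : Equiv.Perm α) x else A (((B*A)^((j-1)/2) : Equiv.Perm α) x)

lemma ff_even (A B : Equiv.Perm α) (x : α) (i : ℤ) :
    ff A B x (2*i) = ((B*A)^i : Equiv.Perm α) x := by
  have h2 : (2*i)/2 = i := Int.mul_ediv_cancel_left i two_ne_zero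
  have he : Even (2*i) := even_two_mul i
  simp [ff, h2, he]

lemma ff_odd (A B : Equiv.Perm α) (x : α) (i : ℤ) :
    ff A B x (2*i+1) = A (((B*A)^i : Equiv.Perm α) x) := by
  have h2 : (2*i+1-1)/2 = i := by
    rw [add_sub_cancel_right]; exact Int.mul_ediv_cancel_left i two_ne_zero
  have he : ¬ Even (2*i+1) := by
    simp [Int.even_add_one, even_two_mul i]
  simp [ff, h2, he]

section Invol
variable {A B : Equiv.Perm α} (hAA : A * A = 1) (hBB : B * B = 1)

lemma inv_eq_self (hAA : A * A = 1) : A⁻¹ = A :=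
  inv_eq_of_mul_eq_one_right hAA

include hAA hBB

lemma semiconj (t : ℤ) : A * (B*A)^t = ((B*A)^(-t)) * A := by
  have h1 : SemiconjBy A (B*A) (B*A)⁻¹ := by
    unfold SemiconjBy
    rw [mul_inv_rev, inv_eq_self hAA, inv_eq_self hBB, mul_assoc]
  have := h1.zpow_right t
  unfold SemiconjBy at this
  rwa [inv_zpow, ← zpow_neg] at this

omit hBB in
lemma apply_apply (y : α) : A (A y) = y := by
  have : (A * A) y = (1 : Equiv.Perm α) y := by rw [hAA]
  simpa using this

/-- action of `A` on indices. -/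
def sA (j : ℤ) : ℤ := if Even j then j+1 else j-1
/-- action of `B` on indices. -/
def sB (j : ℤ) : ℤ := if Even j then j-1 else j+1

omit hBB in
lemma ff_A (x : α) (j : ℤ) : A (ff A B x j) = ff A B x (sA j) := by
  rcases Int.even_or_odd j with ⟨i, hi⟩ | ⟨i, hi⟩
  · subst hi
    rw [← two_mul, ff_even, sA, if_pos (even_two_mul i), ff_odd]
  · subst hi
    have : ¬ Even (2*i+1) := by simp [Int.even_add_one, even_two_mul i]
    rw [ff_odd, sA, if_neg this, add_sub_cancel_right, ff_even, apply_apply hAA]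

lemma ff_B (x : α) (j : ℤ) : B (ff A B x j) = ff A B x (sB j) := by
  rcases Int.even_or_odd j with ⟨i, hi⟩ | ⟨i, hi⟩
  · subst hi
    rw [← two_mul, ff_even, sB, if_pos (even_two_mul i)]
    have h1 : 2*i - 1 = 2*(i-1) + 1 := by ring
    rw [h1, ff_odd]
    have h2 : A * (B*A)^(i-1) = B * (B*A)^i := by
      have hz : (B*A)^i = (B*A) * (B*A)^(i-1) := by
        rw [← zpow_one_add]; ring_nf
      rw [hz, ← mul_assoc, ← mul_assoc, hBB, one_mul]
    calc B (((B*A)^i) x) = (B * (B*A)^i) x := rfl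
    _ = (A * (B*A)^(i-1)) x := by rw [h2]
    _ = A (((B*A)^(i-1)) x) := rfl
  · subst hi
    have hne : ¬ Even (2*i+1) := by simp [Int.even_add_one, even_two_mul i]
    rw [ff_odd, sB, if_neg hne]
    have h1 : 2*i+1+1 = 2*(i+1) := by ring
    rw [h1, ff_even]
    calc B (A (((B*A)^i) x)) = ((B*A) * (B*A)^i) x := rfl
    _ = ((B*A)^(i+1)) x := by rw [add_comm i 1, zpow_one_add]

variable (hA : ∀ y : α, A y ≠ y) (hB : ∀ y : α, B y ≠ y)

include hA hB in
lemma ff_ne_parity (x : α) (i i' : ℤ) :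
    ((B*A)^i : Equiv.Perm α) x ≠ A (((B*A)^i' : Equiv.Perm α) x) := by
  intro h
  set y := ((B*A)^i' : Equiv.Perm α) x with hy
  have hy2 : ((B*A)^(i-i') : Equiv.Perm α) y = A y := by
    rw [hy]
    calc ((B*A)^(i-i')) (((B*A)^i') x) = ((B*A)^(i-i') * (B*A)^i') x := rfl
    _ = ((B*A)^i) x := by rw [← zpow_add, sub_add_cancel]
    _ = A (((B*A)^i') x) := h
  rcases Int.even_or_odd (i - i') with ⟨t, ht⟩ | ⟨t, ht⟩
  · -- i - i' = 2t : A fixes (B*A)^t y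
    apply hA (((B*A)^t : Equiv.Perm α) y)
    have step : A (((B*A)^t) y) = ((B*A)^(-t) : Equiv.Perm α) (A y) := by
      calc A (((B*A)^t) y) = (A * (B*A)^t) y := rfl
      _ = ((B*A)^(-t) * A) y := by rw [semiconj hAA hBB]
      _ = ((B*A)^(-t)) (A y) := rfl
    rw [step, ← hy2]
    calc ((B*A)^(-t)) (((B*A)^(i-i')) y) = ((B*A)^(-t) * (B*A)^(i-i')) y := rfl
    _ = ((B*A)^t) y := by rw [← zpow_add, show (-t + (i - i')) = t by omega]
  · -- i - i' = 2t+1 : B fixes A ((B*A)^t y)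
    apply hB (A (((B*A)^t : Equiv.Perm α) y))
    have step : A (((B*A)^t) y) = ((B*A)^(-t) : Equiv.Perm α) (A y) := by
      calc A (((B*A)^t) y) = (A * (B*A)^t) y := rfl
      _ = ((B*A)^(-t) * A) y := by rw [semiconj hAA hBB]
      _ = ((B*A)^(-t)) (A y) := rfl
    have h3 : A (((B*A)^t) y) = ((B*A)^(t+1) : Equiv.Perm α) y := by
      rw [step, ← hy2]
      calc ((B*A)^(-t)) (((B*A)^(i-i')) y) = ((B*A)^(-t) * (B*A)^(i-i')) y := rfl
      _ = ((B*A)^(t+1)) y := by rw [← zpow_add, show (-t + (i - i')) = t+1 by omega]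
    calc B (A (((B*A)^t) y)) = ((B*A) * (B*A)^t) y := rfl
    _ = ((B*A)^(t+1)) y := by rw [add_comm t 1, zpow_one_add]
    _ = A (((B*A)^t) y) := h3.symm

omit hAA hBB in
lemma zpow_fix_of_eq {c : Equiv.Perm α} {x : α} {i i' : ℤ} (h : (c^i) x = (c^i') x) :
    (c^(i-i')) x = x := by
  have h2 : (c^i') ((c^(i-i')) x) = (c^i') x := by
    rw [← Equiv.Perm.mul_apply, ← zpow_add, add_sub_cancel]
    exact h
  exact (c^i').injective h2

omit hAA hBB in
lemma zpow_eq_of_fix {c : Equiv.Perm α} {x : α} {i i' : ℤ} (h : (c^(i-i')) x = x) :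
    (c^i) x = (c^i') x := by
  have : (c^i) x = (c^i') ((c^(i-i')) x) := by
    rw [← Equiv.Perm.mul_apply, ← zpow_add, add_sub_cancel]
  rw [this, h]

include hA hB in
lemma ff_eq_iff [Fintype α] (x : α) (j j' : ℤ) :
    ff A B x j = ff A B x j' ↔ (2 * (MulAction.period (B*A) x) : ℤ) ∣ (j - j') := by
  have hper : ∀ (s : ℤ), ((B*A)^s : Equiv.Perm α) x = x ↔ ((MulAction.period (B*A) x : ℤ)) ∣ s := by
    intro s
    rw [← MulAction.zpow_smul_eq_iff_period_dvd]
    rfl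
  constructor
  · intro h
    rcases Int.even_or_odd j with ⟨i, hi⟩ | ⟨i, hi⟩ <;>
      rcases Int.even_or_odd j' with ⟨i', hi'⟩ | ⟨i', hi'⟩ <;>
      subst hi <;> subst hi'
    · rw [← two_mul, ← two_mul, ff_even, ff_even] at h
      have hd := (hper (i - i')).1 (zpow_fix_of_eq h)
      rw [show (i + i - (i' + i') : ℤ) = 2 * (i - i') by ring]
      exact mul_dvd_mul_left 2 hd
    · rw [← two_mul, ff_even, ff_odd] at h
      exact absurd h (ff_ne_parity hAA hBB hA hB x i i')
    · rw [← two_mul, ff_odd, ff_even] at h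
      exact absurd h.symm (ff_ne_parity hAA hBB hA hB x i' i)
    · rw [ff_odd, ff_odd] at h
      have h2 : ((B*A)^i : Equiv.Perm α) x = ((B*A)^i') x := A.injective h
      have hd := (hper (i - i')).1 (zpow_fix_of_eq h2)
      rw [show (2*i + 1 - (2*i' + 1) : ℤ) = 2 * (i - i') by ring]
      exact mul_dvd_mul_left 2 hd
  · intro hdvd
    rcases Int.even_or_odd j with ⟨i, hi⟩ | ⟨i, hi⟩ <;>
      rcases Int.even_or_odd j' with ⟨i', hi'⟩ | ⟨i', hi'⟩ <;>
      subst hi <;> subst hi'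
    · rw [← two_mul, ← two_mul, ff_even, ff_even]
      apply zpow_eq_of_fix
      rw [hper]
      have h2 : (2:ℤ) * (MulAction.period (B*A) x : ℤ) ∣ 2 * (i - i') := by
        rw [show (2 * (i - i') : ℤ) = i + i - (i' + i') by ring]
        exact hdvd
      exact (mul_dvd_mul_iff_left (two_ne_zero)).1 h2
    · exfalso
      rcases hdvd with ⟨k, hk⟩
      have h2 : (2:ℤ) ∣ i + i - (2*i' + 1) := ⟨(MulAction.period (B*A) x : ℤ) * k, by rw [hk]; ring⟩
      omega
    · exfalso
      rcases hdvd with ⟨k, hk⟩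
      have h2 : (2:ℤ) ∣ 2*i + 1 - (i' + i') := ⟨(MulAction.period (B*A) x : ℤ) * k, by rw [hk]; ring⟩
      omega
    · rw [ff_odd, ff_odd]
      congr 1
      apply zpow_eq_of_fix
      rw [hper]
      have h2 : (2:ℤ) * (MulAction.period (B*A) x : ℤ) ∣ 2 * (i - i') := by
        rw [show (2 * (i - i') : ℤ) = 2*i + 1 - (2*i' + 1) by ring]
        exact hdvd
      exact (mul_dvd_mul_iff_left (two_ne_zero)).1 h2

include hAA hBB in
lemma range_ff (x : α) :
    Set.range (ff A B x) = MulAction.orbit (Subgroup.closure {A, B} : Subgroup (Equiv.Perm α)) x := by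
  have hAmem : A ∈ Subgroup.closure ({A, B} : Set (Equiv.Perm α)) :=
    Subgroup.subset_closure (by simp)
  have hBmem : B ∈ Subgroup.closure ({A, B} : Set (Equiv.Perm α)) :=
    Subgroup.subset_closure (by simp)
  have hff0 : ff A B x 0 = x := by
    have := ff_even A B x 0
    simpa using this
  apply subset_antisymm
  · rintro _ ⟨j, rfl⟩
    rcases Int.even_or_odd j with ⟨i, hi⟩ | ⟨i, hi⟩ <;> subst hi
    · rw [← two_mul, ff_even]
      exact ⟨⟨(B*A)^i, zpow_mem (mul_mem hBmem hAmem) i⟩, rfl⟩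
    · rw [ff_odd]
      exact ⟨⟨A * (B*A)^i, mul_mem hAmem (zpow_mem (mul_mem hBmem hAmem) i)⟩, rfl⟩
  · rintro _ ⟨⟨g, hg⟩, rfl⟩
    have key : ∀ g ∈ Subgroup.closure ({A, B} : Set (Equiv.Perm α)),
        (∀ j : ℤ, ∃ j', g (ff A B x j) = ff A B x j') ∧
        (∀ j : ℤ, ∃ j', g⁻¹ (ff A B x j) = ff A B x j') := by
      intro g hg
      induction hg using Subgroup.closure_induction with
      | mem g hgmem =>
        rcases hgmem with rfl | rfl
        · exact ⟨fun j => ⟨sA j, ff_A hAA x j⟩,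
            fun j => by rw [inv_eq_self hAA]; exact ⟨sA j, ff_A hAA x j⟩⟩
        · exact ⟨fun j => ⟨sB j, ff_B hAA hBB x j⟩,
            fun j => by rw [inv_eq_self hBB]; exact ⟨sB j, ff_B hAA hBB x j⟩⟩
      | one => exact ⟨fun j => ⟨j, rfl⟩, fun j => ⟨j, by simp⟩⟩
      | mul g h hgc hhc ihg ihh =>
        constructor
        · intro j
          obtain ⟨j1, hj1⟩ := ihh.1 j
          obtain ⟨j2, hj2⟩ := ihg.1 j1
          exact ⟨j2, by rw [Equiv.Perm.mul_apply, hj1, hj2]⟩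
        · intro j
          obtain ⟨j1, hj1⟩ := ihg.2 j
          obtain ⟨j2, hj2⟩ := ihh.2 j1
          exact ⟨j2, by rw [mul_inv_rev, Equiv.Perm.mul_apply, hj1, hj2]⟩
      | inv g hgc ihg => exact ⟨ihg.2, by simpa using ihg.1⟩
    obtain ⟨j', hj'⟩ := (key g hg).1 0
    rw [hff0] at hj'
    exact ⟨j', hj'.symm⟩

include hAA hBB hA hB in
lemma card_orbit [Fintype α] (x : α) :
    Nat.card (MulAction.orbit (Subgroup.closure {A, B} : Subgroup (Equiv.Perm α)) x)
      = 2 * MulAction.period (B*A) x := by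
  classical
  set r := MulAction.period (B*A) x with hr
  have hrpos : 0 < r := MulAction.period_pos_of_orderOf_pos (orderOf_pos (B*A)) x
  haveI : NeZero (2*r) := ⟨by omega⟩
  have hbij : Function.Bijective (fun z : ZMod (2*r) => (⟨ff A B x (z.val : ℤ), Set.mem_range_self _⟩ :
      Set.range (ff A B x))) := by
    constructor
    · intro z z' hzz
      have h1 : ff A B x (z.val : ℤ) = ff A B x (z'.val : ℤ) := congrArg Subtype.val hzz
      have h2 := (ff_eq_iff hAA hBB hA hB x _ _).1 h1
      have h3 : ((z.val : ℤ) : ZMod (2*r)) = ((z'.val : ℤ) : ZMod (2*r)) := by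
        rw [ZMod.intCast_eq_intCast_iff]
        have : ((2*r : ℕ) : ℤ) ∣ (z.val : ℤ) - (z'.val : ℤ) := by
          push_cast
          push_cast at h2
          exact h2
        exact (Int.modEq_iff_dvd.2 this).symm
      push_cast at h3
      rwa [ZMod.natCast_rightInverse z, ZMod.natCast_rightInverse z'] at h3
    · rintro ⟨_, j, rfl⟩
      refine ⟨((j : ZMod (2*r))), ?_⟩
      apply Subtype.ext
      show ff A B x _ = ff A B x j
      apply (ff_eq_iff hAA hBB hA hB x _ _).2
      have : ((((j : ZMod (2*r)).val : ℤ) - j : ℤ) : ZMod (2*r)) = 0 := by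
        push_cast
        rw [ZMod.natCast_rightInverse (j : ZMod (2*r))]
        ring
      have h4 := (ZMod.intCast_zmod_eq_zero_iff_dvd _ _).1 this
      push_cast at h4
      exact h4
  calc Nat.card (MulAction.orbit (Subgroup.closure {A, B} : Subgroup (Equiv.Perm α)) x)
      = Nat.card (Set.range (ff A B x)) := by rw [range_ff hAA hBB]
    _ = Nat.card (ZMod (2*r)) := (Nat.card_congr (Equiv.ofBijective _ hbij)).symm
    _ = 2*r := Nat.card_zmod _

end Invol

section Plumbing
variable {α : Type*} [Fintype α]

lemma orbitSizes_def (G : Subgroup (Equiv.Perm α))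
    [inst : Fintype (Quotient (MulAction.orbitRel G α))] :
    orbitSizes G = (Finset.univ : Finset (Quotient (MulAction.orbitRel G α))).val.map
      (fun q => Nat.card (MulAction.orbit G q.out)) := by
  unfold orbitSizes
  congr!

lemma map_eq_of_equiv {β γ : Type*} [Fintype β] [Fintype γ] (e : β ≃ γ) {s1 : β → ℕ}
    {s2 : γ → ℕ} (h : ∀ b, s2 (e b) = s1 b) :
    (Finset.univ : Finset β).val.map s1 = (Finset.univ : Finset γ).val.map s2 := by
  conv_rhs => rw [← Finset.map_univ_equiv e]
  rw [Finset.map_val, Multiset.map_map]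
  apply Multiset.map_congr rfl
  intro b _
  exact (h b).symm

lemma exists_equiv_of_map_eq {β γ : Type*} [Fintype β] [Fintype γ] {s1 : β → ℕ} {s2 : γ → ℕ}
    (h : (Finset.univ : Finset β).val.map s1 = (Finset.univ : Finset γ).val.map s2) :
    ∃ e : β ≃ γ, ∀ b, s2 (e b) = s1 b := by
  classical
  have key : ∀ v, Fintype.card {b : β // s1 b = v} = Fintype.card {c : γ // s2 c = v} := by
    intro v
    have hc := congrArg (Multiset.count v) h
    rw [Multiset.count_map, Multiset.count_map] at hc
    rw [Fintype.card_subtype, Fintype.card_subtype]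
    show (Finset.filter (fun b => s1 b = v) Finset.univ).card = _
    rw [Finset.card_def, Finset.card_def, Finset.filter_val, Finset.filter_val]
    rw [Multiset.filter_congr (fun a _ => show s1 a = v ↔ v = s1 a from eq_comm),
        Multiset.filter_congr (fun a _ => show s2 a = v ↔ v = s2 a from eq_comm)]
    exact hc
  exact ⟨Equiv.ofFiberEquiv (fun v => Fintype.equivOfCardEq (key v)),
    fun b => Equiv.ofFiberEquiv_map _ b⟩

lemma orbitSizes_sum (G : Subgroup (Equiv.Perm α)) :
    (orbitSizes G).sum = Fintype.card α := by
  classical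
  letI : Fintype (Quotient (MulAction.orbitRel G α)) := Fintype.ofFinite _
  letI : ∀ q : Quotient (MulAction.orbitRel G α), Fintype (MulAction.orbit G q.out) :=
    fun _ => Fintype.ofFinite _
  rw [orbitSizes_def G]
  have h1 : ((Finset.univ : Finset (Quotient (MulAction.orbitRel G α))).val.map
      (fun q => Nat.card (MulAction.orbit G q.out))).sum
      = ∑ q : Quotient (MulAction.orbitRel G α), Nat.card (MulAction.orbit G q.out) := rfl
  rw [h1]
  have e := (MulAction.selfEquivSigmaOrbits G α).symm
  rw [← Fintype.card_congr e, Fintype.card_sigma]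
  apply Finset.sum_congr rfl
  intro q _
  rw [Nat.card_eq_fintype_card]

lemma orbitRel_conj_iff (G : Subgroup (Equiv.Perm α)) (σ : Equiv.Perm α) (a b : α) :
    MulAction.orbitRel G α a b ↔
    MulAction.orbitRel (G.map (MulAut.conj σ).toMonoidHom) α (σ a) (σ b) := by
  rw [MulAction.orbitRel_apply, MulAction.orbitRel_apply,
    MulAction.mem_orbit_iff, MulAction.mem_orbit_iff]
  constructor
  · rintro ⟨⟨g, hg⟩, hgb⟩
    refine ⟨⟨σ * g * σ⁻¹, Subgroup.mem_map.2 ⟨g, hg, rfl⟩⟩, ?_⟩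
    rw [Subgroup.smul_def, Equiv.Perm.smul_def] at hgb ⊢
    simp only [Equiv.Perm.mul_apply, Equiv.Perm.inv_def, Equiv.symm_apply_apply]
    rw [hgb]
  · rintro ⟨⟨g', hg'⟩, hgb⟩
    obtain ⟨g, hg, rfl⟩ := Subgroup.mem_map.1 hg'
    refine ⟨⟨g, hg⟩, ?_⟩
    have hgb' : (σ * g * σ⁻¹) (σ b) = σ a := hgb
    simp only [Equiv.Perm.mul_apply, Equiv.Perm.inv_def, Equiv.symm_apply_apply] at hgb'
    show g b = a
    exact σ.injective hgb'

lemma orbit_map_conj (G : Subgroup (Equiv.Perm α)) (σ : Equiv.Perm α) (x : α) :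
    MulAction.orbit (G.map (MulAut.conj σ).toMonoidHom) (σ x)
      = σ '' (MulAction.orbit G x) := by
  ext y
  constructor
  · rintro ⟨⟨g', hg'⟩, rfl⟩
    obtain ⟨g, hg, rfl⟩ := Subgroup.mem_map.1 hg'
    refine ⟨g x, ⟨⟨g, hg⟩, rfl⟩, ?_⟩
    show σ (g x) = (σ * g * σ⁻¹) (σ x)
    simp [Equiv.Perm.mul_apply]
  · rintro ⟨_, ⟨⟨g, hg⟩, rfl⟩, rfl⟩
    refine ⟨⟨σ * g * σ⁻¹, Subgroup.mem_map.2 ⟨g, hg, rfl⟩⟩, ?_⟩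
    show (σ * g * σ⁻¹) (σ x) = σ (((⟨g, hg⟩ : G) : Equiv.Perm α) x)
    simp [Equiv.Perm.mul_apply]

lemma orbitSizes_map_conj (G : Subgroup (Equiv.Perm α)) (σ : Equiv.Perm α) :
    orbitSizes (G.map (MulAut.conj σ).toMonoidHom) = orbitSizes G := by
  classical
  set G' := G.map (MulAut.conj σ).toMonoidHom with hG'
  letI : Fintype (Quotient (MulAction.orbitRel G α)) := Fintype.ofFinite _
  letI : Fintype (Quotient (MulAction.orbitRel G' α)) := Fintype.ofFinite _
  rw [orbitSizes_def G, orbitSizes_def G']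
  refine (map_eq_of_equiv (Quotient.congr (σ : α ≃ α) (orbitRel_conj_iff G σ)) ?_).symm
  intro q
  set e := Quotient.congr (σ : α ≃ α) (orbitRel_conj_iff G σ) with he
  have h1 : e q = Quotient.mk _ (σ q.out) := by
    conv_lhs => rw [← Quotient.out_eq q]
    rfl
  have h2 : (e q).out ∈ MulAction.orbit G' (σ q.out) := by
    rw [← MulAction.orbitRel_apply]
    exact Quotient.exact ((Quotient.out_eq (e q)).trans h1)
  rw [show MulAction.orbit G' (e q).out = MulAction.orbit G' (σ q.out) from
    MulAction.orbit_eq_iff.2 h2]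
  rw [orbit_map_conj, Nat.card_image_of_injective σ.injective]

lemma exists_conj {A B C D : Equiv.Perm α}
    (hAA : A * A = 1) (hA : ∀ y, A y ≠ y) (hBB : B * B = 1) (hB : ∀ y, B y ≠ y)
    (hCC : C * C = 1) (hC : ∀ y, C y ≠ y) (hDD : D * D = 1) (hD : ∀ y, D y ≠ y)
    (hd : orbitSizes (Subgroup.closure {A, B}) = orbitSizes (Subgroup.closure {C, D})) :
    ∃ σ : Equiv.Perm α, σ * A * σ⁻¹ = C ∧ σ * B * σ⁻¹ = D := by
  classical
  set G1 : Subgroup (Equiv.Perm α) := Subgroup.closure {A, B} with hG1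
  set G2 : Subgroup (Equiv.Perm α) := Subgroup.closure {C, D} with hG2
  letI : Fintype (Quotient (MulAction.orbitRel G1 α)) := Fintype.ofFinite _
  letI : Fintype (Quotient (MulAction.orbitRel G2 α)) := Fintype.ofFinite _
  rw [orbitSizes_def G1, orbitSizes_def G2] at hd
  obtain ⟨e, he⟩ := exists_equiv_of_map_eq hd
  -- for each z, a traversal index
  have hz1 : ∀ z : α, ∃ j : ℤ, ff A B ((Quotient.mk (MulAction.orbitRel G1 α) z).out) j = z := by
    intro z
    have h0' := Quotient.exact (Quotient.out_eq (Quotient.mk (MulAction.orbitRel G1 α) z))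
    have h0 : ((Quotient.mk (MulAction.orbitRel G1 α) z).out) ∈ MulAction.orbit G1 z := h0'
    have h1 : z ∈ MulAction.orbit G1 ((Quotient.mk (MulAction.orbitRel G1 α) z).out) :=
      MulAction.mem_orbit_symm.1 h0
    rw [← range_ff hAA hBB] at h1
    exact h1
  choose j1 hj1 using hz1
  set q1 : α → Quotient (MulAction.orbitRel G1 α) := fun z => Quotient.mk _ z with hq1
  set φ : α → α := fun z => ff C D ((e (q1 z)).out) (j1 z) with hφ
  -- periods agree
  have period_eq : ∀ q : Quotient (MulAction.orbitRel G1 α),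
      MulAction.period (B*A) q.out = MulAction.period (D*C) ((e q).out) := by
    intro q
    have h1 := card_orbit hAA hBB hA hB (q.out)
    have h2 := card_orbit hCC hDD hC hD ((e q).out)
    rw [← hG1] at h1
    rw [← hG2] at h2
    have h3 := he q
    omega
  -- key transport property
  have key : ∀ (z : α) (j : ℤ), ff A B ((q1 z).out) j = z → ff C D ((e (q1 z)).out) j = φ z := by
    intro z j hj
    apply (ff_eq_iff hCC hDD hC hD _ _ _).2
    have h1 : ff A B ((q1 z).out) j = ff A B ((q1 z).out) (j1 z) := by rw [hj, hj1 z]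
    have h2 := (ff_eq_iff hAA hBB hA hB _ _ _).1 h1
    rwa [period_eq (q1 z)] at h2
  -- orbit class of φ z
  have hclass : ∀ z : α, Quotient.mk (MulAction.orbitRel G2 α) (φ z) = e (q1 z) := by
    intro z
    have h1 : φ z ∈ MulAction.orbit G2 ((e (q1 z)).out) := by
      rw [← range_ff hCC hDD]
      exact ⟨j1 z, rfl⟩
    exact (Quotient.sound h1).trans (Quotient.out_eq _)
  -- class invariance under A, B
  have hqA : ∀ z : α, q1 (A z) = q1 z := by
    intro z
    apply Quotient.sound
    exact ⟨⟨A, Subgroup.subset_closure (by simp)⟩, rfl⟩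
  have hqB : ∀ z : α, q1 (B z) = q1 z := by
    intro z
    apply Quotient.sound
    exact ⟨⟨B, Subgroup.subset_closure (by simp)⟩, rfl⟩
  -- equivariance
  have hφA : ∀ z : α, φ (A z) = C (φ z) := by
    intro z
    have h1 : ff A B ((q1 (A z)).out) (sA (j1 z)) = A z := by
      rw [hqA z, ← ff_A hAA]
      exact congrArg A (hj1 z)
    have h2 := key (A z) (sA (j1 z)) h1
    rw [hqA z] at h2
    rw [← h2, ← key z (j1 z) (hj1 z), ← ff_A hCC]
  have hφB : ∀ z : α, φ (B z) = D (φ z) := by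
    intro z
    have h1 : ff A B ((q1 (B z)).out) (sB (j1 z)) = B z := by
      rw [hqB z, ← ff_B hAA hBB]
      exact congrArg B (hj1 z)
    have h2 := key (B z) (sB (j1 z)) h1
    rw [hqB z] at h2
    rw [← h2, ← key z (j1 z) (hj1 z), ← ff_B hCC hDD]
  -- injectivity
  have hinj : Function.Injective φ := by
    intro z z' h
    have hcq : e (q1 z) = e (q1 z') := by
      rw [← hclass z, ← hclass z', h]
    have hq : q1 z = q1 z' := e.injective hcq
    have h1 : ff C D ((e (q1 z)).out) (j1 z) = ff C D ((e (q1 z)).out) (j1 z') := by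
      conv_lhs => rw [show ff C D ((e (q1 z)).out) (j1 z) = φ z from rfl]
      rw [h, hφ]
      simp only
      rw [hq]
    have h2 := (ff_eq_iff hCC hDD hC hD _ _ _).1 h1
    rw [← period_eq (q1 z)] at h2
    have h3 : ff A B ((q1 z).out) (j1 z) = ff A B ((q1 z).out) (j1 z') :=
      (ff_eq_iff hAA hBB hA hB _ _ _).2 h2
    rw [hj1 z] at h3
    rw [show ff A B ((q1 z).out) (j1 z') = ff A B ((q1 z').out) (j1 z') by rw [hq]] at h3
    rw [hj1 z'] at h3
    exact h3
  have hbij := (Finite.injective_iff_bijective).1 hinj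
  set σ : Equiv.Perm α := Equiv.ofBijective φ hbij with hσ
  have hσA : σ * A = C * σ := by
    ext z
    exact hφA z
  have hσB : σ * B = D * σ := by
    ext z
    exact hφB z
  refine ⟨σ, ?_, ?_⟩
  · rw [hσA]
    group
  · rw [hσB]
    group

lemma permOrbitSizes_conj {N : ℕ} (σ π : Equiv.Perm (Fin N)) :
    permOrbitSizes (σ * π * σ⁻¹) = permOrbitSizes π := by
  unfold permOrbitSizes
  have h : Subgroup.zpowers (σ * π * σ⁻¹)
      = (Subgroup.zpowers π).map (MulAut.conj σ).toMonoidHom := by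
    rw [MonoidHom.map_zpowers]
    rfl
  rw [h, orbitSizes_map_conj]

lemma dMatch_even_pos {N : ℕ} {A B : Equiv.Perm (Fin N)}
    (hAA : A * A = 1) (hA : ∀ y, A y ≠ y) (hBB : B * B = 1) (hB : ∀ y, B y ≠ y) :
    ∀ v ∈ dMatch A B, ∃ k, 0 < k ∧ v = 2 * k := by
  unfold dMatch
  letI : Fintype (Quotient (MulAction.orbitRel
    (Subgroup.closure {A, B} : Subgroup (Equiv.Perm (Fin N))) (Fin N))) := Fintype.ofFinite _
  rw [orbitSizes_def]
  intro v hv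
  obtain ⟨q, _, rfl⟩ := Multiset.mem_map.1 hv
  rw [card_orbit hAA hBB hA hB]
  exact ⟨MulAction.period (B*A) q.out,
    MulAction.period_pos_of_orderOf_pos (orderOf_pos (B*A)) _, rfl⟩

lemma dMatch_sum {N : ℕ} (A B : Equiv.Perm (Fin N)) : (dMatch A B).sum = N := by
  unfold dMatch
  rw [orbitSizes_sum, Fintype.card_fin]

end Plumbing
end PMaux

namespace PMaux

lemma exists_partition {n : ℕ} (A B : PerfMatching (2 * n)) :
    ∃ τ : Nat.Partition n, dMatch A.1 B.1 = twice τ.parts := by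
  classical
  have hsum : (dMatch A.1 B.1).sum = 2 * n := by
    rw [dMatch_sum]
  have heven := dMatch_even_pos A.2.1 A.2.2 B.2.1 B.2.2
  have h2 : twice ((dMatch A.1 B.1).map (fun v => v / 2)) = dMatch A.1 B.1 := by
    unfold twice
    rw [Multiset.map_map]
    conv_rhs => rw [← Multiset.map_id (dMatch A.1 B.1)]
    apply Multiset.map_congr rfl
    intro v hv
    obtain ⟨k, hk, rfl⟩ := heven v hv
    simp only [Function.comp_apply, id_eq]
    omega
  refine ⟨⟨(dMatch A.1 B.1).map (fun v => v / 2), ?_, ?_⟩, h2.symm⟩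
  · intro i hi
    obtain ⟨v, hv, rfl⟩ := Multiset.mem_map.1 hi
    obtain ⟨k, hk, rfl⟩ := heven v hv
    omega
  · have h3 := congrArg Multiset.sum h2
    unfold twice at h3
    rw [Multiset.sum_map_mul_left, Multiset.map_id'] at h3
    omega

lemma conjCount_eq_of_conj {n : ℕ} (μ : Nat.Partition (2 * n)) (A B C D : PerfMatching (2 * n))
    (σ : Equiv.Perm (Fin (2 * n))) (h1 : σ * A.1 * σ⁻¹ = C.1) (h2 : σ * B.1 * σ⁻¹ = D.1) :
    conjCount n μ A B = conjCount n μ C D := by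
  apply Nat.card_congr
  apply Equiv.subtypeEquiv (MulAut.conj σ).toEquiv
  intro π
  have hconj : ((MulAut.conj σ).toEquiv π : Equiv.Perm (Fin (2*n))) = σ * π * σ⁻¹ := rfl
  rw [hconj]
  constructor
  · rintro ⟨hμ, hp⟩
    refine ⟨by rw [permOrbitSizes_conj]; exact hμ, ?_⟩
    rw [← h1, ← h2, ← hp]
    group
  · rintro ⟨hμ, hp⟩
    rw [permOrbitSizes_conj] at hμ
    refine ⟨hμ, ?_⟩
    rw [← h1, ← h2] at hp
    have hp2 : σ * (π * A.1 * π⁻¹) * σ⁻¹ = σ * B.1 * σ⁻¹ := by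
      rw [← hp]; group
    have := congrArg (fun x => σ⁻¹ * x * σ) hp2
    simpa [mul_assoc] using this

end PMaux

/-- The number of permutations of cycle type `μ ⊢ 2n` taking `A` to `B` depends only on
`d(A,B)`; and denoting by `m(μ,2τ)` the common value when `d(A,B) = 2τ`, the matrix
`K_μ` decomposes as `Σ_{τ ⊢ n} m(μ,2τ) · N_{2τ}`. -/
theorem conjCount_depends_only_on_d_and_Kmat_decomp (n : ℕ) (hn : 1 ≤ n)
    (μ : Nat.Partition (2 * n)) :
    (∀ A B C D : PerfMatching (2 * n),
      dMatch A.1 B.1 = dMatch C.1 D.1 → conjCount n μ A B = conjCount n μ C D) ∧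
    (∀ m : Nat.Partition n → ℕ,
      (∀ (τ : Nat.Partition n) (A B : PerfMatching (2 * n)),
        dMatch A.1 B.1 = twice τ.parts → conjCount n μ A B = m τ) →
      Kmat n μ = ∑ τ : Nat.Partition n, (m τ : ℂ) • Nmat n τ) := by
  classical
  have part1 : ∀ A B C D : PerfMatching (2 * n),
      dMatch A.1 B.1 = dMatch C.1 D.1 → conjCount n μ A B = conjCount n μ C D := by
    intro A B C D hd
    obtain ⟨σ, h1, h2⟩ := PMaux.exists_conj A.2.1 A.2.2 B.2.1 B.2.2 C.2.1 C.2.2 D.2.1 D.2.2 hd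
    exact PMaux.conjCount_eq_of_conj μ A B C D σ h1 h2
  refine ⟨part1, ?_⟩
  intro m hm
  ext A B
  rw [Kmat, Matrix.sum_apply]
  obtain ⟨τ0, hτ0⟩ := PMaux.exists_partition A B
  have hval : conjCount n μ A B = m τ0 := hm τ0 A B hτ0
  rw [Matrix.of_apply, hval]
  rw [Finset.sum_eq_single τ0]
  · rw [Matrix.smul_apply, Nmat, Matrix.of_apply, if_pos hτ0]
    simp
  · intro τ _ hτ
    rw [Matrix.smul_apply, Nmat, Matrix.of_apply, if_neg, smul_zero]
    intro hc
    apply hτ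
    have : τ.parts = τ0.parts := by
      have h4 : twice τ.parts = twice τ0.parts := by rw [← hc, hτ0]
      exact Multiset.map_injective (fun a b hab => by omega) h4
    exact Nat.Partition.ext this
  · intro hmem
    exact absurd (Finset.mem_univ τ0) hmem
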